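/- Let x and y be n-dimensional probability vectors whose components are arranged in nonincreasing order. If x ∈ M(y) and y ∈ M(x), then x = y. That is, x and y are interconvertible under multiple-copy transformations if and only if they are equal (up to ordering of components). -/

import Mathlib

open Finset

variable {ι κ : Type*}

/-- `eSum x l` is the sum of the `l` largest components of `x`. -/
noncomputable def eSum [Fintype ι] (x : ι → ℝ) (l : ℕ) : ℝ :=
  sSup {r : ℝ | ∃ s : Finset ι, s.card = l ∧ r = ∑ i ∈ s, x i}

/-- Majorization `x ≺ y` for vectors over the same (finite) index type:
`e_l(x) ≤ e_l(y)` for all `1 ≤ l ≤ n - 1`, with equal total sums. -/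
def Maj [Fintype ι] (x y : ι → ℝ) : Prop :=
  (∀ l : ℕ, 1 ≤ l → l < Fintype.card ι → eSum x l ≤ eSum y l) ∧
    ∑ i, x i = ∑ i, y i

/-- A probability vector: nonnegative components summing to 1. -/
def IsProbVec [Fintype ι] (x : ι → ℝ) : Prop :=
  (∀ i, 0 ≤ x i) ∧ ∑ i, x i = 1

/-- Kronecker product of two vectors. -/
def kron (x : ι → ℝ) (c : κ → ℝ) : ι × κ → ℝ := fun p => x p.1 * c p.2

/-- `k`-fold Kronecker power of a vector. -/
def kpow (x : ι → ℝ) (k : ℕ) : (Fin k → ι) → ℝ := fun f => ∏ j, x (f j)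

/-- Direct sum (concatenation) of two vectors. -/
def dsum (x : ι → ℝ) (c : κ → ℝ) : ι ⊕ κ → ℝ := Sum.elim x c

/-- `k`-fold direct sum (concatenation) of `x` with itself. -/
def dpow (x : ι → ℝ) (k : ℕ) : Fin k × ι → ℝ := fun p => x p.2

/-- `x ∈ S°(y)`: all partial-sum inequalities `e_l(x) < e_l(y)` are strict for
`1 ≤ l ≤ n - 1`, and the total sums coincide. -/
def InteriorS [Fintype ι] (x y : ι → ℝ) : Prop :=
  (∀ l : ℕ, 1 ≤ l → l < Fintype.card ι → eSum x l < eSum y l) ∧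
    ∑ i, x i = ∑ i, y i

/-- `d_x`: the number of nonzero components of `x`. -/
noncomputable def dsupp (x : ι → ℝ) : ℕ := Nat.card (Function.support x)

/-- The `α`-Renyi entropy `S^{(α)}(x)`; at `α = 1` it is the Shannon entropy. -/
noncomputable def renyi [Fintype ι] (x : ι → ℝ) (α : ℝ) : ℝ :=
  if α = 1 then -∑ i, x i * Real.logb 2 (x i)
  else (if 0 ≤ α then (1 : ℝ) else -1) / (1 - α) *
    Real.logb 2 (∑ i, if x i = 0 then 0 else x i ^ α)

/-- The Renyi entropy of `x` is not less than that of `y`. -/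
def RenyiGE [Fintype ι] [Fintype κ] (x : ι → ℝ) (y : κ → ℝ) : Prop :=
  (dsupp x > dsupp y ∧ ∀ α : ℝ, 0 ≤ α → renyi y α ≤ renyi x α) ∨
  (dsupp x = dsupp y ∧ ∀ α : ℝ, renyi y α ≤ renyi x α)


/- ===== Auxiliary lemmas for stmt6 ===== -/

private lemma strictMono_fin_le' {l N : ℕ} {f : Fin l → Fin N} (hf : StrictMono f) :
    ∀ (v : ℕ) (h : v < l), v ≤ (f ⟨v, h⟩ : ℕ) := by
  intro v
  induction v with
  | zero => intro h; exact Nat.zero_le _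
  | succ v ih =>
      intro h
      have hv : v < l := Nat.lt_of_succ_lt h
      have h1 : f ⟨v, hv⟩ < f ⟨v + 1, h⟩ := hf (by simp [Fin.mk_lt_mk])
      have h2 : (f ⟨v, hv⟩ : ℕ) < (f ⟨v + 1, h⟩ : ℕ) := h1
      have := ih hv
      omega

private lemma sum_le_top' {N : ℕ} {a : Fin N → ℝ} (ha : Antitone a) {l : ℕ} (hl : l ≤ N)
    (s : Finset (Fin N)) (hs : s.card = l) :
    ∑ i ∈ s, a i ≤ ∑ j : Fin l, a (Fin.castLE hl j) := by
  classical
  set g := s.orderEmbOfFin hs with hg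
  have hinj : Function.Injective g := g.injective
  have himg : Finset.image g univ = s := by
    apply Finset.eq_of_subset_of_card_le
    · intro i hi
      simp only [Finset.mem_image] at hi
      obtain ⟨j, _, rfl⟩ := hi
      exact Finset.orderEmbOfFin_mem s hs j
    · rw [Finset.card_image_of_injective _ hinj, hs, Finset.card_univ, Fintype.card_fin]
  rw [← himg, Finset.sum_image (fun i _ j _ h => hinj h)]
  apply Finset.sum_le_sum
  intro j _
  apply ha
  rw [Fin.le_def]
  exact strictMono_fin_le' g.strictMono j j.2

private lemma eSum_antitone' {N : ℕ} {a : Fin N → ℝ} (ha : Antitone a) {l : ℕ} (hl : l ≤ N) :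
    eSum a l = ∑ j : Fin l, a (Fin.castLE hl j) := by
  unfold eSum
  have hmem : (∑ j : Fin l, a (Fin.castLE hl j)) ∈
      {r : ℝ | ∃ s : Finset (Fin N), s.card = l ∧ r = ∑ i ∈ s, a i} := by
    refine ⟨univ.map (Fin.castLEEmb hl), by simp, ?_⟩
    rw [Finset.sum_map]
    rfl
  apply le_antisymm
  · apply csSup_le ⟨_, hmem⟩
    rintro r ⟨s, hs, rfl⟩
    exact sum_le_top' ha hl s hs
  · exact le_csSup ⟨_, fun r hr => by obtain ⟨s, hs, rfl⟩ := hr; exact sum_le_top' ha hl s hs⟩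
      hmem

private lemma eSum_comp_equiv' {ι κ : Type*} [Fintype ι] [Fintype κ] (e : κ ≃ ι) (a : ι → ℝ)
    (l : ℕ) : eSum (a ∘ e) l = eSum a l := by
  unfold eSum
  congr 1
  ext r
  constructor
  · rintro ⟨s, hs, rfl⟩
    exact ⟨s.map e.toEmbedding, by simp [hs], by rw [Finset.sum_map]; rfl⟩
  · rintro ⟨s, hs, rfl⟩
    refine ⟨s.map e.symm.toEmbedding, by simp [hs], ?_⟩
    rw [Finset.sum_map]
    simp

private lemma exists_antitone_equiv' {ι : Type*} [Fintype ι] (a : ι → ℝ) :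
    ∃ e : Fin (Fintype.card ι) ≃ ι, Antitone (a ∘ e) := by
  classical
  set e0 := (Fintype.equivFin ι).symm
  set g : Fin (Fintype.card ι) → ℝ := a ∘ e0 with hgdef
  refine ⟨(Fin.revPerm.trans (Tuple.sort g)).trans e0, ?_⟩
  intro i j hij
  have := Tuple.monotone_sort g (Fin.rev_le_rev.mpr hij)
  exact this

private lemma schur_nat' (N p : ℕ) (A B : ℕ → ℝ)
    (hA0 : ∀ i < N, 0 ≤ A i) (hB0 : ∀ i < N, 0 ≤ B i)
    (hAa : ∀ i j, i ≤ j → j < N → A j ≤ A i) (hBa : ∀ i j, i ≤ j → j < N → B j ≤ B i)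
    (hD : ∀ l ≤ N, ∑ i ∈ range l, A i ≤ ∑ i ∈ range l, B i)
    (hT : ∑ i ∈ range N, A i = ∑ i ∈ range N, B i) :
    ∑ i ∈ range N, A i ^ p ≤ ∑ i ∈ range N, B i ^ p := by
  set C : ℕ → ℝ := fun i => ∑ q ∈ range p, B i ^ q * A i ^ (p - 1 - q) with hC
  have key : ∀ i, B i ^ p - A i ^ p = C i * (B i - A i) := fun i =>
    (geom_sum₂_mul (B i) (A i) p).symm
  have habel := Finset.sum_range_by_parts C (fun i => B i - A i) N
  simp only [smul_eq_mul] at habel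
  have hTz : ∑ i ∈ range N, (B i - A i) = 0 := by
    rw [Finset.sum_sub_distrib, hT]; ring
  have hmain : 0 ≤ ∑ i ∈ range N, C i * (B i - A i) := by
    rw [habel, hTz, mul_zero, zero_sub, neg_nonneg]
    apply Finset.sum_nonpos
    intro i hi
    rw [Finset.mem_range] at hi
    have hiN : i + 1 < N := by omega
    apply mul_nonpos_of_nonpos_of_nonneg
    · rw [sub_nonpos]
      apply Finset.sum_le_sum
      intro q _
      have h1 : 0 ≤ B (i+1) := hB0 _ hiN
      have h2 : 0 ≤ A (i+1) := hA0 _ hiN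
      exact mul_le_mul (pow_le_pow_left₀ h1 (hBa i (i+1) (by omega) hiN) q)
        (pow_le_pow_left₀ h2 (hAa i (i+1) (by omega) hiN) _)
        (pow_nonneg h2 _) (pow_nonneg (hB0 i (by omega)) _)
    · rw [Finset.sum_sub_distrib, sub_nonneg]
      exact hD (i+1) (by omega)
  have hfin : 0 ≤ ∑ i ∈ range N, (B i ^ p - A i ^ p) := by
    rw [Finset.sum_congr rfl (fun i _ => key i)]
    exact hmain
  rw [Finset.sum_sub_distrib] at hfin
  linarith

private lemma schur' {ι : Type*} [Fintype ι] (a b : ι → ℝ)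
    (ha0 : ∀ i, 0 ≤ a i) (hb0 : ∀ i, 0 ≤ b i)
    (hm : ∀ l : ℕ, 1 ≤ l → l < Fintype.card ι → eSum a l ≤ eSum b l)
    (hT : ∑ i, a i = ∑ i, b i) (p : ℕ) :
    ∑ i, a i ^ p ≤ ∑ i, b i ^ p := by
  classical
  set N := Fintype.card ι with hN
  obtain ⟨ea, hea⟩ := exists_antitone_equiv' a
  obtain ⟨eb, heb⟩ := exists_antitone_equiv' b
  set A : ℕ → ℝ := fun i => if h : i < N then a (ea ⟨i, h⟩) else 0 with hA
  set B : ℕ → ℝ := fun i => if h : i < N then b (eb ⟨i, h⟩) else 0 with hB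
  have hAl : ∀ (l : ℕ) (hl : l ≤ N), ∑ i ∈ range l, A i
      = ∑ j : Fin l, (a ∘ ea) (Fin.castLE hl j) := by
    intro l hl
    rw [← Fin.sum_univ_eq_sum_range A l]
    refine Finset.sum_congr rfl fun j _ => ?_
    have hj : (j : ℕ) < N := lt_of_lt_of_le j.2 hl
    simp only [hA, dif_pos hj]
    rfl
  have hBl : ∀ (l : ℕ) (hl : l ≤ N), ∑ i ∈ range l, B i
      = ∑ j : Fin l, (b ∘ eb) (Fin.castLE hl j) := by
    intro l hl
    rw [← Fin.sum_univ_eq_sum_range B l]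
    refine Finset.sum_congr rfl fun j _ => ?_
    have hj : (j : ℕ) < N := lt_of_lt_of_le j.2 hl
    simp only [hB, dif_pos hj]
    rfl
  have hcast : ∀ j : Fin N, Fin.castLE (le_refl N) j = j := fun j => rfl
  have hAT : ∑ i ∈ range N, A i = ∑ i, a i := by
    rw [hAl N (le_refl N)]
    simp only [hcast]
    exact Equiv.sum_comp ea a
  have hBT : ∑ i ∈ range N, B i = ∑ i, b i := by
    rw [hBl N (le_refl N)]
    simp only [hcast]
    exact Equiv.sum_comp eb b
  have hmain := schur_nat' N p A B
    (fun i hi => by simp only [hA, dif_pos hi]; exact ha0 _)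
    (fun i hi => by simp only [hB, dif_pos hi]; exact hb0 _)
    (fun i j hij hj => by
      have hi : i < N := lt_of_le_of_lt hij hj
      simp only [hA, dif_pos hi, dif_pos hj]
      exact hea (by exact_mod_cast hij))
    (fun i j hij hj => by
      have hi : i < N := lt_of_le_of_lt hij hj
      simp only [hB, dif_pos hi, dif_pos hj]
      exact heb (by exact_mod_cast hij))
    (by
      intro l hl
      rcases Nat.eq_zero_or_pos l with rfl | hl1
      · simp
      rcases eq_or_lt_of_le hl with rfl | hlN
      · rw [hAT, hBT, hT]
      · rw [hAl l hl, hBl l hl, ← eSum_antitone' hea hl, ← eSum_antitone' heb hl,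
          eSum_comp_equiv' ea a l, eSum_comp_equiv' eb b l]
        exact hm l hl1 hlN)
    (by rw [hAT, hBT, hT])
  have hAP : ∑ i ∈ range N, A i ^ p = ∑ i, a i ^ p := by
    rw [← Fin.sum_univ_eq_sum_range (fun i => A i ^ p) N,
      ← Equiv.sum_comp ea (fun i => a i ^ p)]
    refine Finset.sum_congr rfl fun j _ => ?_
    simp only [hA, dif_pos j.2]
    rfl
  have hBP : ∑ i ∈ range N, B i ^ p = ∑ i, b i ^ p := by
    rw [← Fin.sum_univ_eq_sum_range (fun i => B i ^ p) N,
      ← Equiv.sum_comp eb (fun i => b i ^ p)]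
    refine Finset.sum_congr rfl fun j _ => ?_
    simp only [hB, dif_pos j.2]
    rfl
  rw [← hAP, ← hBP]
  exact hmain

private lemma kpow_pow_sum' {n : ℕ} (x : Fin n → ℝ) (k p : ℕ) :
    ∑ f : Fin k → Fin n, (kpow x k f) ^ p = (∑ i, x i ^ p) ^ k := by
  rw [Finset.sum_pow' univ (fun i => x i ^ p) k, Fintype.piFinset_univ]
  refine Finset.sum_congr rfl fun f _ => ?_
  rw [kpow, ← Finset.prod_pow]

private lemma powsum_le' {n k : ℕ} (x y : Fin n → ℝ)
    (hx0 : ∀ i, 0 ≤ x i) (hy0 : ∀ i, 0 ≤ y i) (hk : 1 ≤ k)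
    (hmaj : Maj (kpow x k) (kpow y k)) (p : ℕ) :
    ∑ i, x i ^ p ≤ ∑ i, y i ^ p := by
  have hxk : ∀ f : Fin k → Fin n, 0 ≤ kpow x k f := fun f =>
    Finset.prod_nonneg fun j _ => hx0 _
  have hyk : ∀ f : Fin k → Fin n, 0 ≤ kpow y k f := fun f =>
    Finset.prod_nonneg fun j _ => hy0 _
  have h := schur' (kpow x k) (kpow y k) hxk hyk hmaj.1 hmaj.2 p
  rw [kpow_pow_sum' x k p, kpow_pow_sum' y k p] at h
  exact le_of_pow_le_pow_left₀ (by omega) (Finset.sum_nonneg fun i _ => pow_nonneg (hy0 i) p) h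

private lemma aux_ne' {n : ℕ} (x y : Fin n → ℝ) (hya : Antitone y)
    (hx0 : ∀ i, 0 ≤ x i) (hy0 : ∀ i, 0 ≤ y i)
    (hE : ∀ p : ℕ, ∑ i, x i ^ p = ∑ i, y i ^ p)
    (j : Fin n) (hpre : ∀ i, i < j → x i = y i) (hj : y j < x j) : False := by
  classical
  set s := univ.filter (fun i : Fin n => ¬ i < j) with hs
  have htail : ∀ p : ℕ, ∑ i ∈ s, x i ^ p = ∑ i ∈ s, y i ^ p := by
    intro p
    have h1 := Finset.sum_filter_add_sum_filter_not univ (fun i : Fin n => i < j)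
      (fun i => x i ^ p)
    have h2 := Finset.sum_filter_add_sum_filter_not univ (fun i : Fin n => i < j)
      (fun i => y i ^ p)
    have h3 : ∑ i ∈ univ.filter (fun i : Fin n => i < j), x i ^ p
        = ∑ i ∈ univ.filter (fun i : Fin n => i < j), y i ^ p :=
      Finset.sum_congr rfl fun i hi => by
        rw [hpre i (by simpa using hi)]
    have h4 := hE p
    rw [← hs] at h1 h2
    linarith
  have hjs : j ∈ s := by simp [hs]
  have hxlb : ∀ p : ℕ, x j ^ p ≤ ∑ i ∈ s, x i ^ p := fun p =>
    Finset.single_le_sum (fun i _ => pow_nonneg (hx0 i) p) hjs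
  have hcard : (s.card : ℝ) ≤ (n : ℝ) := by
    have := Finset.card_filter_le univ (fun i : Fin n => ¬ i < j)
    rw [Finset.card_univ, Fintype.card_fin] at this
    exact_mod_cast this
  have hyub : ∀ p : ℕ, ∑ i ∈ s, y i ^ p ≤ (n : ℝ) * y j ^ p := by
    intro p
    calc ∑ i ∈ s, y i ^ p ≤ ∑ _i ∈ s, y j ^ p := by
          apply Finset.sum_le_sum
          intro i hi
          have hji : j ≤ i := by
            simp only [hs, Finset.mem_filter] at hi
            exact not_lt.mp hi.2
          exact pow_le_pow_left₀ (hy0 i) (hya hji) p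
      _ = (s.card : ℝ) * y j ^ p := by rw [Finset.sum_const, nsmul_eq_mul]
      _ ≤ (n : ℝ) * y j ^ p := mul_le_mul_of_nonneg_right hcard (pow_nonneg (hy0 j) p)
  rcases eq_or_lt_of_le (hy0 j) with h0 | h0
  · have h1 := htail 1
    simp only [pow_one] at h1
    have h2 : x j ≤ ∑ i ∈ s, x i := by simpa using hxlb 1
    have h3 : ∑ i ∈ s, y i ≤ (n : ℝ) * y j := by simpa using hyub 1
    rw [← h0, mul_zero] at h3
    linarith
  · have hr : 1 < x j / y j := (one_lt_div h0).mpr hj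
    obtain ⟨p, hp⟩ := pow_unbounded_of_one_lt (n : ℝ) hr
    have h1 : (n : ℝ) * y j ^ p < (x j / y j) ^ p * y j ^ p :=
      mul_lt_mul_of_pos_right hp (pow_pos h0 p)
    have h2 : (x j / y j) ^ p * y j ^ p = x j ^ p := by
      rw [div_pow, div_mul_cancel₀]
      exact pow_ne_zero p (ne_of_gt h0)
    have h3 := htail p
    have h4 := hxlb p
    have h5 := hyub p
    linarith

/-- If `x ∈ M(y)` and `y ∈ M(x)` (both nonincreasingly ordered probability
vectors), then `x = y`. -/
theorem stmt6 {n : ℕ} (x y : Fin n → ℝ)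
    (hx : IsProbVec x) (hy : IsProbVec y) (hxa : Antitone x) (hya : Antitone y)
    (h1 : ∃ k : ℕ, 1 ≤ k ∧ Maj (kpow x k) (kpow y k))
    (h2 : ∃ k : ℕ, 1 ≤ k ∧ Maj (kpow y k) (kpow x k)) :
    x = y := by
  classical
  obtain ⟨k, hk, hmk⟩ := h1
  obtain ⟨m, hm, hmm⟩ := h2
  have hE : ∀ p : ℕ, ∑ i, x i ^ p = ∑ i, y i ^ p := fun p =>
    le_antisymm (powsum_le' x y hx.1 hy.1 hk hmk p) (powsum_le' y x hy.1 hx.1 hm hmm p)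
  by_contra hne
  have hex : ∃ i, x i ≠ y i := by
    by_contra h
    push_neg at h
    exact hne (funext h)
  set t := univ.filter (fun i : Fin n => x i ≠ y i) with ht
  have hts : t.Nonempty := ⟨hex.choose, by simp [ht, hex.choose_spec]⟩
  set j := t.min' hts with hjdef
  have hj : x j ≠ y j := by
    have := t.min'_mem hts
    simpa [ht] using this
  have hpre : ∀ i, i < j → x i = y i := by
    intro i hi
    by_contra hne2
    exact absurd (t.min'_le i (by simp [ht, hne2])) (not_le.mpr hi)
  rcases hj.lt_or_gt with h | h
  · exact aux_ne' y x hxa hy.1 hx.1 (fun p => (hE p).symm) j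
      (fun i hi => (hpre i hi).symm) h
  · exact aux_ne' x y hya hx.1 hy.1 hE j hpre h
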